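/- Let n ≥ 5 be an odd integer. Then λ(K⁺_{(n−1)/2,(n+1)/2}) is the largest real root of the polynomial g(x) = x³ − x² + ((1 − n²)/4)x + n²/4 − n − 5/4; that is, g(λ(K⁺_{(n−1)/2,(n+1)/2})) = 0 and every real root x of g satisfies x ≤ λ(K⁺_{(n−1)/2,(n+1)/2}). -/

import Mathlib

open SimpleGraph

/-- The spectral radius (largest adjacency eigenvalue) of a finite simple graph. -/
noncomputable def specRad {V : Type*} [Fintype V] (G : SimpleGraph V) : ℝ :=
  letI : DecidableEq V := Classical.decEq V
  letI : DecidableRel G.Adj := Classical.decRel _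
  sSup (spectrum ℝ (G.adjMatrix ℝ))

/-- `KplusAB a b` : the complete bipartite graph `K_{a,b}` with one extra edge
(between vertices `0` and `1`) inside the part of size `a`. -/
def KplusAB (a b : ℕ) : SimpleGraph (Fin a ⊕ Fin b) where
  Adj x y :=
    match x, y with
    | .inl i, .inl j => (i.val = 0 ∧ j.val = 1) ∨ (i.val = 1 ∧ j.val = 0)
    | .inl _, .inr _ => True
    | .inr _, .inl _ => True
    | .inr _, .inr _ => False
  symm := ⟨by rintro (i | i) (j | j) h <;> simp_all <;> tauto⟩
  loopless := ⟨by rintro (i | i) h <;> simp_all <;> omega⟩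

namespace KplusAux

open Matrix

/-- membership in the spectrum of a real matrix means having an eigenvector -/
theorem memspec {n : Type*} [Fintype n] [DecidableEq n] (M : Matrix n n ℝ) (μ : ℝ) :
    μ ∈ spectrum ℝ M ↔ ∃ v, v ≠ 0 ∧ M *ᵥ v = μ • v := by
  rw [spectrum.mem_iff]
  rw [Matrix.isUnit_iff_isUnit_det, isUnit_iff_ne_zero, not_ne_iff,
    ← Matrix.exists_mulVec_eq_zero_iff]
  have key : ∀ v, (algebraMap ℝ (Matrix n n ℝ)) μ *ᵥ v = μ • v := by
    intro v
    ext i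
    simp [Matrix.algebraMap_matrix_apply, Matrix.mulVec, dotProduct]
  constructor
  · rintro ⟨v, hv, h⟩
    refine ⟨v, hv, ?_⟩
    rw [Matrix.sub_mulVec, key, sub_eq_zero] at h
    exact h.symm
  · rintro ⟨v, hv, h⟩
    refine ⟨v, hv, ?_⟩
    rw [Matrix.sub_mulVec, key, sub_eq_zero, h]

/-- the adjacency matrix of `KplusAB a b`, with the same classical instances as
in `specRad`. -/
noncomputable def Amat (a b : ℕ) : Matrix (Fin a ⊕ Fin b) (Fin a ⊕ Fin b) ℝ :=
  letI : DecidableEq (Fin a ⊕ Fin b) := Classical.decEq _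
  letI : DecidableRel (KplusAB a b).Adj := Classical.decRel _
  (KplusAB a b).adjMatrix ℝ

variable {a b : ℕ}

lemma Amat_inl_inl (i j : Fin a) :
    Amat a b (.inl i) (.inl j) =
      if (i.val = 0 ∧ j.val = 1) ∨ (i.val = 1 ∧ j.val = 0) then 1 else 0 := by
  by_cases h : (i.val = 0 ∧ j.val = 1) ∨ (i.val = 1 ∧ j.val = 0)
  · rw [if_pos h]; unfold Amat; rw [SimpleGraph.adjMatrix_apply, if_pos]; exact h
  · rw [if_neg h]; unfold Amat; rw [SimpleGraph.adjMatrix_apply, if_neg]; exact h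

lemma Amat_inl_inr (i : Fin a) (j : Fin b) : Amat a b (.inl i) (.inr j) = 1 := by
  unfold Amat; rw [SimpleGraph.adjMatrix_apply, if_pos]; trivial

lemma Amat_inr_inl (j : Fin b) (i : Fin a) : Amat a b (.inr j) (.inl i) = 1 := by
  unfold Amat; rw [SimpleGraph.adjMatrix_apply, if_pos]; trivial

lemma Amat_inr_inr (j j' : Fin b) : Amat a b (.inr j) (.inr j') = 0 := by
  unfold Amat; rw [SimpleGraph.adjMatrix_apply, if_neg]; exact fun h => h

lemma mulVec_inr (v : Fin a ⊕ Fin b → ℝ) (j : Fin b) :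
    (Amat a b *ᵥ v) (.inr j) = ∑ i : Fin a, v (.inl i) := by
  simp only [Matrix.mulVec, dotProduct, Fintype.sum_sum_type,
    Amat_inr_inl, Amat_inr_inr, one_mul, zero_mul, Finset.sum_const_zero, add_zero]

lemma mulVec_inl (ha : 2 ≤ a) (v : Fin a ⊕ Fin b → ℝ) (i : Fin a) :
    (Amat a b *ᵥ v) (.inl i) =
      (if i.val = 0 then v (.inl ⟨1, by omega⟩)
        else if i.val = 1 then v (.inl ⟨0, by omega⟩) else 0)
      + ∑ j : Fin b, v (.inr j) := by
  simp only [Matrix.mulVec, dotProduct, Fintype.sum_sum_type,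
    Amat_inl_inl, Amat_inl_inr, one_mul]
  congr 1
  rcases Nat.lt_or_ge i.val 2 with h2 | h2
  · interval_cases h : i.val
    · rw [if_pos rfl]
      rw [Finset.sum_congr rfl (g := fun j => if j = (⟨1, by omega⟩ : Fin a) then v (.inl j) else 0)]
      · rw [Finset.sum_ite_eq' Finset.univ (⟨1, by omega⟩ : Fin a) (fun j => v (.inl j))]
        simp
      · intro j _
        by_cases hj : j = (⟨1, by omega⟩ : Fin a)
        · subst hj; rw [if_pos, if_pos rfl, one_mul]; left; exact ⟨rfl, rfl⟩
        · rw [if_neg, if_neg hj, zero_mul]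
          rintro (⟨h0, h1⟩ | ⟨h0, h1⟩)
          · exact hj (Fin.ext h1)
          · omega
    · rw [if_neg (by omega), if_pos rfl]
      rw [Finset.sum_congr rfl (g := fun j => if j = (⟨0, by omega⟩ : Fin a) then v (.inl j) else 0)]
      · rw [Finset.sum_ite_eq' Finset.univ (⟨0, by omega⟩ : Fin a) (fun j => v (.inl j))]
        simp
      · intro j _
        by_cases hj : j = (⟨0, by omega⟩ : Fin a)
        · subst hj; rw [if_pos, if_pos rfl, one_mul]; right; exact ⟨rfl, rfl⟩
        · rw [if_neg, if_neg hj, zero_mul]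
          rintro (⟨h0, h1⟩ | ⟨h0, h1⟩)
          · omega
          · exact hj (Fin.ext h1)
  · rw [if_neg (by omega), if_neg (by omega)]
    apply Finset.sum_eq_zero
    intro j _
    rw [if_neg, zero_mul]
    rintro (⟨h0, h1⟩ | ⟨h0, h1⟩) <;> omega

lemma eig_char (ha : 2 ≤ a) (hb : 2 ≤ b) (μ : ℝ) (v : Fin a ⊕ Fin b → ℝ) (hv : v ≠ 0)
    (heq : Amat a b *ᵥ v = μ • v) :
    μ = 0 ∨ μ = -1 ∨ μ ^ 3 - μ ^ 2 - (a * b : ℝ) * μ + a * b - 2 * b = 0 := by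
  set i0 : Fin a := ⟨0, by omega⟩ with hi0
  set i1 : Fin a := ⟨1, by omega⟩ with hi1
  set U : ℝ := ∑ j : Fin b, v (.inr j) with hU
  set SA : ℝ := ∑ i : Fin a, v (.inl i) with hSA
  set S : ℝ := v (.inl i0) + v (.inl i1) with hS
  have heq' : ∀ x, (Amat a b *ᵥ v) x = μ * v x := fun x => by rw [heq]; rfl
  have EqA : ∀ i : Fin a, μ * v (.inl i) =
      (if i.val = 0 then v (.inl i1) else if i.val = 1 then v (.inl i0) else 0) + U := by
    intro i; rw [← heq' (.inl i), mulVec_inl ha]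
  have EqB : ∀ j : Fin b, μ * v (.inr j) = SA := by
    intro j; rw [← heq' (.inr j), mulVec_inr]
  have Eq0 : μ * v (.inl i0) = v (.inl i1) + U := by
    have := EqA i0; rwa [if_pos rfl] at this
  have Eq1 : μ * v (.inl i1) = v (.inl i0) + U := by
    have := EqA i1; rwa [if_neg (by simp [hi1]), if_pos rfl] at this
  have hsumA : μ * SA = S + (a : ℝ) * U := by
    have : ∑ i : Fin a, (μ * v (.inl i)) = ∑ i : Fin a,
        ((if i.val = 0 then v (.inl i1) else if i.val = 1 then v (.inl i0) else 0) + U) :=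
      Finset.sum_congr rfl (fun i _ => EqA i)
    rw [← Finset.mul_sum] at this
    rw [hSA, this, Finset.sum_add_distrib, Finset.sum_const, Finset.card_univ,
      Fintype.card_fin, nsmul_eq_mul]
    congr 1
    · have : ∀ i : Fin a,
          (if i.val = 0 then v (.inl i1) else if i.val = 1 then v (.inl i0) else 0) =
          (if i = i0 then v (.inl i1) else 0) + (if i = i1 then v (.inl i0) else 0) := by
        intro i
        rcases Nat.lt_or_ge i.val 2 with h2 | h2
        · interval_cases h : i.val
          · have : i = i0 := Fin.ext (by simp [hi0, h])
            subst this
            rw [if_pos rfl, if_pos rfl, if_neg (by simp [hi1, Fin.ext_iff, hi0]), add_zero]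
          · have : i = i1 := Fin.ext (by simp [hi1, h])
            subst this
            rw [if_neg (by simp [hi1]), if_pos rfl, if_neg (by simp [hi0, Fin.ext_iff, hi1]),
              if_pos rfl, zero_add]
        · rw [if_neg (by omega), if_neg (by omega), if_neg, if_neg, add_zero]
          · rw [Fin.ext_iff]; simp [hi1]; omega
          · rw [Fin.ext_iff]; simp [hi0]; omega
      rw [Finset.sum_congr rfl (fun i _ => this i), Finset.sum_add_distrib,
        Finset.sum_ite_eq' Finset.univ i0 (fun _ => v (.inl i1)),
        Finset.sum_ite_eq' Finset.univ i1 (fun _ => v (.inl i0)),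
        if_pos (Finset.mem_univ _), if_pos (Finset.mem_univ _), hS]
      ring
  have hsumB : μ * U = (b : ℝ) * SA := by
    have : ∑ j : Fin b, (μ * v (.inr j)) = ∑ j : Fin b, SA :=
      Finset.sum_congr rfl (fun j _ => EqB j)
    rw [← Finset.mul_sum] at this
    rw [hU, this, Finset.sum_const, Finset.card_univ, Fintype.card_fin, nsmul_eq_mul]
  have h1 : μ * S = S + 2 * U := by rw [hS]; linear_combination Eq0 + Eq1
  have h2 : μ * (SA - S) = ((a : ℝ) - 2) * U := by linear_combination hsumA - h1
  have hbpos : (0 : ℝ) < b := by exact_mod_cast Nat.lt_of_lt_of_le Nat.zero_lt_two hb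
  have hA2 : μ ^ 2 * U = (b : ℝ) * S + (a : ℝ) * b * U := by
    linear_combination μ * hsumB + (b : ℝ) * h1 + (b : ℝ) * h2
  have hg : (μ ^ 3 - μ ^ 2 - (a * b : ℝ) * μ + a * b - 2 * b) * U = 0 := by
    linear_combination (μ - 1) * hA2 + (b : ℝ) * h1
  by_cases hUz : U = 0
  · -- degenerate cases
    have hSA0 : SA = 0 := by
      have := hsumB; rw [hUz, mul_zero] at this
      have := this.symm
      rcases mul_eq_zero.mp this with h | h
      · exact absurd h (by positivity)
      · exact h
    have hS0 : S = 0 := by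
      have h2' := h2; rw [hUz, hSA0, mul_zero, zero_sub] at h2'
      have h1' := h1; rw [hUz, mul_zero, add_zero] at h1'
      nlinarith [h2', h1']
    by_cases hμ0 : μ = 0
    · exact Or.inl hμ0
    · right; left
      have hv2 : ∀ i : Fin a, 2 ≤ i.val → v (.inl i) = 0 := by
        intro i hi
        have := EqA i
        rw [if_neg (by omega), if_neg (by omega), hUz, zero_add] at this
        exact (mul_eq_zero.mp this).resolve_left hμ0
      have hvB : ∀ j : Fin b, v (.inr j) = 0 := by
        intro j
        have := EqB j
        rw [hSA0] at this
        exact (mul_eq_zero.mp this).resolve_left hμ0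
      have hv1 : v (.inl i1) = - v (.inl i0) := by linarith [hS]
      have hkey : (μ + 1) * v (.inl i0) = 0 := by
        have := Eq0; rw [hUz, add_zero, hv1] at this; linarith
      by_cases hv0 : v (.inl i0) = 0
      · exfalso
        apply hv
        funext x
        rcases x with i | j
        · rcases Nat.lt_or_ge i.val 2 with hlt | hge
          · interval_cases h : i.val
            · have : i = i0 := Fin.ext (by simp [hi0, h])
              rw [this, hv0]; rfl
            · have : i = i1 := Fin.ext (by simp [hi1, h])
              rw [this, hv1, hv0]; simp
          · exact hv2 i hge
        · exact hvB j
      · have := (mul_eq_zero.mp hkey).resolve_right hv0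
        linarith
  · right; right
    exact (mul_eq_zero.mp hg).resolve_right hUz

lemma zero_eig (ha : 2 ≤ a) (hb : 2 ≤ b) :
    ∃ v : Fin a ⊕ Fin b → ℝ, v ≠ 0 ∧ Amat a b *ᵥ v = (0 : ℝ) • v := by
  set j0 : Fin b := ⟨0, by omega⟩ with hj0
  set j1 : Fin b := ⟨1, by omega⟩ with hj1
  set v : Fin a ⊕ Fin b → ℝ := fun x =>
    match x with
    | .inl _ => 0
    | .inr j => if j = j0 then 1 else if j = j1 then -1 else 0 with hvdef
  have hsumB : ∑ j : Fin b, v (.inr j) = 0 := by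
    have step : ∀ j : Fin b, v (.inr j) =
        (if j = j0 then (1:ℝ) else 0) + (if j = j1 then (-1:ℝ) else 0) := by
      intro j
      show (if j = j0 then (1:ℝ) else if j = j1 then -1 else 0) = _
      by_cases h0 : j = j0
      · rw [if_pos h0, if_pos h0, if_neg (by rw [h0]; simp [hj0, hj1, Fin.ext_iff]), add_zero]
      · rw [if_neg h0, if_neg h0, zero_add]
    rw [Finset.sum_congr rfl (fun j _ => step j), Finset.sum_add_distrib,
      Finset.sum_ite_eq' Finset.univ j0 (fun _ => (1:ℝ)),
      Finset.sum_ite_eq' Finset.univ j1 (fun _ => (-1:ℝ)),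
      if_pos (Finset.mem_univ _), if_pos (Finset.mem_univ _)]
    ring
  refine ⟨v, ?_, ?_⟩
  · intro h
    have : v (.inr j0) = 0 := by rw [h]; rfl
    rw [show v (.inr j0) = 1 from if_pos rfl] at this
    norm_num at this
  · funext x
    rcases x with i | j
    · rw [mulVec_inl ha]
      show _ = (0:ℝ) * _
      rw [hsumB, zero_mul, add_zero]
      split_ifs <;> rfl
    · rw [mulVec_inr]
      show _ = (0:ℝ) * _
      rw [zero_mul]
      exact Finset.sum_const_zero

lemma root_eig (ha : 2 ≤ a) (hb : 2 ≤ b) (x : ℝ) (hx0 : x ≠ 0)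
    (hg : x ^ 3 - x ^ 2 - (a * b : ℝ) * x + a * b - 2 * b = 0) :
    ∃ v : Fin a ⊕ Fin b → ℝ, v ≠ 0 ∧ Amat a b *ᵥ v = x • v := by
  have hbpos : (0 : ℝ) < b := by exact_mod_cast Nat.lt_of_lt_of_le Nat.zero_lt_two hb
  set i0 : Fin a := ⟨0, by omega⟩ with hi0
  set i1 : Fin a := ⟨1, by omega⟩ with hi1
  set s : ℝ := b * x with hs
  set t : ℝ := b * (x - 1) with ht
  set u : ℝ := x * (x - 1) with hu
  set v : Fin a ⊕ Fin b → ℝ := fun y =>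
    match y with
    | .inl i => if i.val = 0 ∨ i.val = 1 then s else t
    | .inr _ => u with hvdef
  have hventry : ∀ i : Fin a, v (.inl i) = if i.val = 0 ∨ i.val = 1 then s else t :=
    fun i => rfl
  have hsumB : ∑ j : Fin b, v (.inr j) = (b : ℝ) * u := by
    show ∑ _j : Fin b, u = _
    rw [Finset.sum_const, Finset.card_univ, Fintype.card_fin, nsmul_eq_mul]
  have hsumA : ∑ i : Fin a, v (.inl i) = (a : ℝ) * t + 2 * (s - t) := by
    have step : ∀ i : Fin a, v (.inl i) =
        t + ((if i = i0 then s - t else 0) + (if i = i1 then s - t else 0)) := by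
      intro i
      rw [hventry]
      rcases Nat.lt_or_ge i.val 2 with h2 | h2
      · interval_cases h : i.val
        · have : i = i0 := Fin.ext (by simp [hi0, h])
          subst this
          rw [if_pos (Or.inl rfl), if_pos rfl, if_neg (by simp [hi0, hi1, Fin.ext_iff])]
          ring
        · have : i = i1 := Fin.ext (by simp [hi1, h])
          subst this
          rw [if_pos (Or.inr rfl), if_neg (by simp [hi0, hi1, Fin.ext_iff]), if_pos rfl]
          ring
      · rw [if_neg (by omega), if_neg, if_neg]
        · ring
        · rw [Fin.ext_iff]; simp [hi1]; omega
        · rw [Fin.ext_iff]; simp [hi0]; omega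
    rw [Finset.sum_congr rfl (fun i _ => step i), Finset.sum_add_distrib,
      Finset.sum_add_distrib,
      Finset.sum_ite_eq' Finset.univ i0 (fun _ => s - t),
      Finset.sum_ite_eq' Finset.univ i1 (fun _ => s - t),
      if_pos (Finset.mem_univ _), if_pos (Finset.mem_univ _),
      Finset.sum_const, Finset.card_univ, Fintype.card_fin, nsmul_eq_mul]
    ring
  refine ⟨v, ?_, ?_⟩
  · intro h
    have h0 : v (.inl i0) = 0 := by rw [h]; rfl
    rw [hventry, if_pos (Or.inl rfl)] at h0
    rw [hs] at h0
    rcases mul_eq_zero.mp h0 with h | h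
    · exact absurd h (by positivity)
    · exact hx0 h
  · funext y
    rcases y with i | j
    · rw [mulVec_inl ha]
      show _ = x * v (.inl i)
      have e1 : v (.inl (⟨1, by omega⟩ : Fin a)) = s := by
        rw [hventry]; exact if_pos (Or.inr rfl)
      have e0 : v (.inl (⟨0, by omega⟩ : Fin a)) = s := by
        rw [hventry]; exact if_pos (Or.inl rfl)
      by_cases h0 : i.val = 0
      · rw [if_pos h0, e1, hsumB,
          show v (.inl i) = s from by rw [hventry, if_pos (Or.inl h0)], hs, hu]
        ring
      · by_cases h1 : i.val = 1
        · rw [if_neg h0, if_pos h1, e0, hsumB,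
            show v (.inl i) = s from by rw [hventry, if_pos (Or.inr h1)], hs, hu]
          ring
        · rw [if_neg h0, if_neg h1, hsumB, zero_add,
            show v (.inl i) = t from by rw [hventry, if_neg (by tauto)], ht, hu]
          ring
    · rw [mulVec_inr, hsumA]
      show _ = x * u
      rw [hs, ht, hu]
      linear_combination -hg

/-- main general statement -/
theorem main (a b : ℕ) (ha : 2 ≤ a) (hb : 2 ≤ b) :
    (sSup (spectrum ℝ (Amat a b))) ^ 3 - (sSup (spectrum ℝ (Amat a b))) ^ 2
        - (a * b : ℝ) * sSup (spectrum ℝ (Amat a b)) + a * b - 2 * b = 0 ∧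
      ∀ x : ℝ, x ^ 3 - x ^ 2 - (a * b : ℝ) * x + a * b - 2 * b = 0 →
        x ≤ sSup (spectrum ℝ (Amat a b)) := by
  have har : (2 : ℝ) ≤ a := by exact_mod_cast ha
  have hbr : (2 : ℝ) ≤ b := by exact_mod_cast hb
  set L := sSup (spectrum ℝ (Amat a b)) with hL
  set f : ℝ → ℝ := fun x => x ^ 3 - x ^ 2 - (a * b : ℝ) * x + a * b - 2 * b with hf
  -- the root set of the cubic is finite
  set P : Polynomial ℝ :=
    Polynomial.X ^ 3 - Polynomial.X ^ 2 - Polynomial.C ((a : ℝ) * b) * Polynomial.X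
      + Polynomial.C ((a : ℝ) * b - 2 * b) with hP
  have hPco : P.coeff 3 = 1 := by
    simp [hP, Polynomial.coeff_X_pow, Polynomial.coeff_C]
  have hPne : P ≠ 0 := fun h => by simp [h] at hPco
  have hPeval : ∀ x : ℝ, P.eval x = f x := by
    intro x; simp [hP, hf]; ring
  have hroots_fin : {x : ℝ | f x = 0}.Finite := by
    have := Polynomial.finite_setOf_isRoot hPne
    refine this.subset ?_
    intro x hx
    simp only [Set.mem_setOf_eq, Polynomial.IsRoot, hPeval]
    exact hx
  have hZfin : ({(0 : ℝ), -1} ∪ {x : ℝ | f x = 0}).Finite :=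
    ((Set.finite_singleton (-1 : ℝ)).insert 0).union hroots_fin
  have hsub : spectrum ℝ (Amat a b) ⊆ ({(0 : ℝ), -1} ∪ {x : ℝ | f x = 0}) := by
    intro μ hμ
    obtain ⟨v, hv, hev⟩ := (memspec (Amat a b) μ).mp hμ
    rcases eig_char ha hb μ v hv hev with h | h | h
    · exact Or.inl (Or.inl h)
    · exact Or.inl (Or.inr h)
    · exact Or.inr h
  have hfin : (spectrum ℝ (Amat a b)).Finite := hZfin.subset hsub
  -- IVT : there is a root r with 1 < r
  have hcont : Continuous f := by continuity
  set x0 : ℝ := (a : ℝ) * b + 2 with hx0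
  have h1x0 : (1 : ℝ) ≤ x0 := by nlinarith
  have hf1 : f 1 < 0 := by simp only [hf]; nlinarith
  have hfx0 : 0 ≤ f x0 := by
    simp only [hf, hx0]
    have hc : (4 : ℝ) ≤ (a : ℝ) * b := by nlinarith
    have hab2b : (0 : ℝ) ≤ ((a : ℝ) - 2) * b := by nlinarith
    nlinarith [hc, hab2b, sq_nonneg ((a : ℝ) * b)]
  obtain ⟨r, hrIcc, hr⟩ : ∃ r ∈ Set.Icc (1:ℝ) x0, f r = 0 := by
    have him := intermediate_value_Icc h1x0 hcont.continuousOn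
    have h0mem : (0 : ℝ) ∈ Set.Icc (f 1) (f x0) := ⟨le_of_lt hf1, hfx0⟩
    obtain ⟨r, hrmem, hfr⟩ := him h0mem
    exact ⟨r, hrmem, hfr⟩
  have hr1 : 1 < r := by
    rcases lt_or_eq_of_le hrIcc.1 with h | h
    · exact h
    · exfalso; rw [← h] at hr; linarith
  have hrspec : r ∈ spectrum ℝ (Amat a b) := by
    rw [memspec]
    exact root_eig ha hb r (by linarith) hr
  have hbdd : BddAbove (spectrum ℝ (Amat a b)) := hfin.bddAbove
  have hne : (spectrum ℝ (Amat a b)).Nonempty := ⟨r, hrspec⟩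
  have hLmem : L ∈ spectrum ℝ (Amat a b) := hne.csSup_mem hfin
  have hrL : r ≤ L := le_csSup hbdd hrspec
  have hL1 : 1 < L := lt_of_lt_of_le hr1 hrL
  constructor
  · obtain ⟨v, hv, hev⟩ := (memspec (Amat a b) L).mp hLmem
    rcases eig_char ha hb L v hv hev with h | h | h
    · exfalso; rw [h] at hL1; linarith
    · exfalso; rw [h] at hL1; linarith
    · exact h
  · intro x hx
    by_cases hx0' : x = 0
    · refine le_trans ?_ hrL
      rw [hx0']; linarith
    · apply le_csSup hbdd
      rw [memspec]
      exact root_eig ha hb x hx0' hx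

end KplusAux

theorem Kplus_odd_char_poly (n : ℕ) (hn : 5 ≤ n) (hodd : Odd n) :
    (specRad (KplusAB ((n - 1) / 2) ((n + 1) / 2))) ^ 3
        - (specRad (KplusAB ((n - 1) / 2) ((n + 1) / 2))) ^ 2
        + ((1 - (n : ℝ) ^ 2) / 4) * specRad (KplusAB ((n - 1) / 2) ((n + 1) / 2))
        + (n : ℝ) ^ 2 / 4 - n - 5 / 4 = 0 ∧
      ∀ x : ℝ, x ^ 3 - x ^ 2 + ((1 - (n : ℝ) ^ 2) / 4) * x + (n : ℝ) ^ 2 / 4 - n - 5 / 4 = 0 →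
        x ≤ specRad (KplusAB ((n - 1) / 2) ((n + 1) / 2)) := by
  obtain ⟨k, hk⟩ := hodd
  have e1 : (n - 1) / 2 = k := by omega
  have e2 : (n + 1) / 2 = k + 1 := by omega
  have hk2 : 2 ≤ k := by omega
  rw [e1, e2]
  have hrfl : specRad (KplusAB k (k + 1)) = sSup (spectrum ℝ (KplusAux.Amat k (k + 1))) := by
    unfold specRad KplusAux.Amat
    congr!
  obtain ⟨h1, h2⟩ := KplusAux.main k (k + 1) hk2 (by omega)
  have hcast : (n : ℝ) = 2 * k + 1 := by
    rw [hk]; push_cast; ring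
  push_cast at h1 h2
  rw [hrfl, hcast]
  constructor
  · linear_combination h1
  · intro x hx
    apply h2
    linear_combination hx
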